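/- Let n ≥ m ≥ 1 with n ≥ 6m + 7. Then gr_3(K_3 : S(n,m)) = 5·(n/2) + 1 if n is even, and gr_3(K_3 : S(n,m)) = 5·((n-1)/2) + 2 if n is odd; in other words, every 3-edge-coloring of the complete graph on that many vertices contains either a rainbow triangle or a monochromatic copy of S(n,m), and there is a 3-coloring of the complete graph on one fewer vertex avoiding both. -/

import Mathlib

open Finset

/-- A symmetric edge-coloring of a complete graph, given as a function on ordered
pairs of vertices. -/
def IsSymmColoring {V C : Type*} (c : V → V → C) : Prop := ∀ u v, c u v = c v u

/-- The coloring `c` contains a rainbow triangle: three vertices whose three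
connecting edges get three distinct colors. -/
def HasRainbowTriangle {V C : Type*} (c : V → V → C) : Prop :=
  ∃ u v w : V, u ≠ v ∧ u ≠ w ∧ v ≠ w ∧
    c u v ≠ c u w ∧ c u v ≠ c v w ∧ c u w ≠ c v w

/-- The coloring `c` contains a monochromatic triangle. -/
def HasMonoTriangle {V C : Type*} (c : V → V → C) : Prop :=
  ∃ u v w : V, u ≠ v ∧ u ≠ w ∧ v ≠ w ∧ c u v = c u w ∧ c u v = c v w

/-- The coloring `c` contains a monochromatic copy of the double star `S(n,m)`:
two adjacent centers `u, v`, a set `A` of `n` further leaves at `u` and a set `B`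
of `m` further leaves at `v`, all edges in one color. -/
def HasMonoDoubleStar {V C : Type*} (c : V → V → C) (n m : ℕ) : Prop :=
  ∃ (u v : V) (A B : Finset V) (col : C),
    u ≠ v ∧ A.card = n ∧ B.card = m ∧ Disjoint A B ∧
    u ∉ A ∧ u ∉ B ∧ v ∉ A ∧ v ∉ B ∧
    c u v = col ∧ (∀ a ∈ A, c u a = col) ∧ (∀ b ∈ B, c v b = col)

/-- Every `k`-edge-coloring of the complete graph on `N` vertices contains a
rainbow triangle or a monochromatic `S(n,m)` (so `gr_k(K_3 : S(n,m)) ≤ N`). -/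
def grHolds (k n m N : ℕ) : Prop :=
  ∀ c : Fin N → Fin N → Fin k, IsSymmColoring c →
    HasRainbowTriangle c ∨ HasMonoDoubleStar c n m

/-- There is a `k`-edge-coloring of the complete graph on `N` vertices with no
rainbow triangle and no monochromatic `S(n,m)` (so `gr_k(K_3 : S(n,m)) > N`). -/
def grAvoid (k n m N : ℕ) : Prop :=
  ∃ c : Fin N → Fin N → Fin k, IsSymmColoring c ∧
    ¬ HasRainbowTriangle c ∧ ¬ HasMonoDoubleStar c n m

section Upper
variable {N : ℕ}

/-- color-μ neighborhood -/
def NB (c : Fin N → Fin N → Fin 3) (μ : Fin 3) (u : Fin N) : Finset (Fin N) :=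
  univ.filter (fun x => x ≠ u ∧ c u x = μ)

lemma mem_NB {c : Fin N → Fin N → Fin 3} {μ : Fin 3} {u x : Fin N} :
    x ∈ NB c μ u ↔ x ≠ u ∧ c u x = μ := by simp [NB]

lemma self_not_mem_NB {c : Fin N → Fin N → Fin 3} {μ : Fin 3} {u : Fin N} :
    u ∉ NB c μ u := by simp [NB]

/-- the three neighborhoods partition everything else -/
lemma degsum {c : Fin N → Fin N → Fin 3} (i j k : Fin 3)
    (hij : i ≠ j) (hik : i ≠ k) (hjk : j ≠ k) (u : Fin N) :
    (NB c i u).card + (NB c j u).card + (NB c k u).card = N - 1 := by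
  have h3 : ∀ (μ a b c' : Fin 3), a≠b→a≠c'→b≠c'→ (μ = a ∨ μ = b ∨ μ = c') := by decide
  have hdisj1 : Disjoint (NB c i u) (NB c j u) := by
    rw [Finset.disjoint_left]
    intro x hx hx'
    rw [mem_NB] at hx hx'
    exact hij (hx.2 ▸ hx'.2 ▸ rfl)
  have hdisj2 : Disjoint (NB c i u ∪ NB c j u) (NB c k u) := by
    rw [Finset.disjoint_left]
    intro x hx hx'
    rw [Finset.mem_union] at hx
    rw [mem_NB] at hx'
    rcases hx with hx | hx <;> rw [mem_NB] at hx
    · exact hik (hx.2 ▸ hx'.2 ▸ rfl)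
    · exact hjk (hx.2 ▸ hx'.2 ▸ rfl)
  have hun : (NB c i u ∪ NB c j u) ∪ NB c k u = univ.erase u := by
    ext x
    simp only [Finset.mem_union, mem_NB, Finset.mem_erase, Finset.mem_univ, and_true]
    constructor
    · rintro ((h | h) | h) <;> exact h.1
    · intro hx
      rcases h3 (c u x) i j k hij hik hjk with h | h | h
      · exact Or.inl (Or.inl ⟨hx, h⟩)
      · exact Or.inl (Or.inr ⟨hx, h⟩)
      · exact Or.inr ⟨hx, h⟩
  have := Finset.card_union_of_disjoint hdisj2
  rw [hun] at this
  rw [Finset.card_union_of_disjoint hdisj1] at this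
  rw [Finset.card_erase_of_mem (Finset.mem_univ u), Finset.card_univ, Fintype.card_fin] at this
  omega

lemma deg_le {c : Fin N → Fin N → Fin 3} (μ : Fin 3) (u : Fin N) :
    (NB c μ u).card ≤ N - 1 := by
  have : NB c μ u ⊆ univ.erase u := by
    intro x hx; rw [mem_NB] at hx
    exact Finset.mem_erase.mpr ⟨hx.1, Finset.mem_univ x⟩
  calc (NB c μ u).card ≤ (univ.erase u).card := Finset.card_le_card this
  _ = N - 1 := by rw [Finset.card_erase_of_mem (Finset.mem_univ u), Finset.card_univ, Fintype.card_fin]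

/-- Key double-star-finding lemma -/
lemma existsDS {c : Fin N → Fin N → Fin 3} {n m : ℕ} {u v : Fin N} {μ : Fin 3}
    (huv : u ≠ v) (hc : c u v = μ)
    (hX : n ≤ ((NB c μ u).erase v).card)
    (hY : m ≤ ((NB c μ v).erase u).card)
    (hU : n + m ≤ (((NB c μ u ∪ NB c μ v)).erase u |>.erase v).card) :
    HasMonoDoubleStar c n m := by
  classical
  set X := (NB c μ u).erase v with hXdef
  set Y := (NB c μ v).erase u with hYdef
  have hXY : ((NB c μ u ∪ NB c μ v).erase u).erase v = X ∪ Y := by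
    ext x
    simp only [hXdef, hYdef, Finset.mem_erase, Finset.mem_union, mem_NB]
    constructor
    · rintro ⟨hxv, hxu, (h | h)⟩
      · exact Or.inl ⟨hxv, h⟩
      · exact Or.inr ⟨hxu, h⟩
    · rintro (⟨hxv, h⟩ | ⟨hxu, h⟩)
      · exact ⟨hxv, h.1, Or.inl h⟩
      · exact ⟨h.1, hxu, Or.inr h⟩
  rw [hXY] at hU
  -- choose A ⊆ X with card n, prioritizing X \ Y
  have hsplit : ∃ A : Finset (Fin N), A ⊆ X ∧ A.card = n ∧ m ≤ (Y \ A).card := by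
    by_cases h : n ≤ (X \ Y).card
    · obtain ⟨A, hA, hAcard⟩ := Finset.exists_subset_card_eq h
      refine ⟨A, hA.trans (Finset.sdiff_subset), hAcard, ?_⟩
      have hdisj : Disjoint A Y := by
        refine Finset.disjoint_left.mpr (fun x hx hx' => ?_)
        exact (Finset.mem_sdiff.mp (hA hx)).2 hx'
      have : Y \ A = Y := Finset.sdiff_eq_self_of_disjoint hdisj.symm
      rw [this]
      calc m ≤ ((NB c μ v).erase u).card := hY
      _ = Y.card := rfl
    · push_neg at h
      have hXi : n - (X \ Y).card ≤ (X ∩ Y).card := by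
        have h1 : (X \ Y).card + (X ∩ Y).card = X.card := by
          rw [Finset.card_sdiff_add_card_inter]
        omega
      obtain ⟨C, hC, hCcard⟩ := Finset.exists_subset_card_eq hXi
      refine ⟨(X \ Y) ∪ C, ?_, ?_, ?_⟩
      · intro x hx
        rcases Finset.mem_union.mp hx with h' | h'
        · exact (Finset.mem_sdiff.mp h').1
        · exact (Finset.mem_inter.mp (hC h')).1
      · have hd : Disjoint (X \ Y) C := by
          refine Finset.disjoint_left.mpr (fun x hx hx' => ?_)
          exact (Finset.mem_sdiff.mp hx).2 (Finset.mem_inter.mp (hC hx')).2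
        rw [Finset.card_union_of_disjoint hd, hCcard]
        omega
      · -- |Y \ A| ≥ m
        have hYA : Y \ ((X \ Y) ∪ C) = Y \ C := by
          ext x
          simp only [Finset.mem_sdiff, Finset.mem_union, not_or]
          constructor
          · rintro ⟨hx, h1, h2⟩; exact ⟨hx, h2⟩
          · rintro ⟨hx, h2⟩
            exact ⟨hx, fun hmem => hmem.2 hx, h2⟩
        rw [hYA]
        have h2 : Y.card ≤ (Y \ C).card + C.card := by
          have h1 := Finset.card_sdiff_add_card Y C
          have h3 := Finset.card_le_card (Finset.subset_union_left : Y ⊆ Y ∪ C)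
          omega
        have hu : (X ∪ Y).card ≤ (X \ Y).card + Y.card := by
          have : X ∪ Y = (X \ Y) ∪ Y := by rw [Finset.sdiff_union_self_eq_union]
          rw [this]
          exact (Finset.card_union_le _ _)
        omega
  obtain ⟨A, hAX, hAcard, hYA⟩ := hsplit
  obtain ⟨B, hBsub, hBcard⟩ := Finset.exists_subset_card_eq hYA
  refine ⟨u, v, A, B, μ, huv, hAcard, hBcard, ?_, ?_, ?_, ?_, ?_, hc, ?_, ?_⟩
  · -- Disjoint A B
    refine Finset.disjoint_left.mpr (fun x hx hx' => ?_)
    exact (Finset.mem_sdiff.mp (hBsub hx')).2 hx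
  · intro hu
    exact (mem_NB.mp (Finset.mem_of_mem_erase (hAX hu))).1 rfl
  · intro hu
    exact Finset.notMem_erase u _ (Finset.mem_sdiff.mp (hBsub hu)).1
  · intro hv
    exact Finset.notMem_erase v _ (hAX hv)
  · intro hv
    exact (mem_NB.mp (Finset.mem_of_mem_erase (Finset.mem_sdiff.mp (hBsub hv)).1)).1 rfl
  · intro a ha
    exact (mem_NB.mp (Finset.mem_of_mem_erase (hAX ha))).2
  · intro b hb
    exact (mem_NB.mp (Finset.mem_of_mem_erase (Finset.mem_sdiff.mp (hBsub hb)).1)).2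

end Upper

section Part1

lemma fin3_resolve : ∀ (μ' i j k : Fin 3), i≠j→i≠k→j≠k→ μ' ≠ j → (μ' = i ∨ μ' = k) := by decide

variable {N : ℕ} {c : Fin N → Fin N → Fin 3} {n m : ℕ}

/-- Fact H: neighbors of a huge vertex are tiny. -/
lemma factH (hsym : IsSymmColoring c) (hDS : ¬ HasMonoDoubleStar c n m)
    {u v : Fin N} {μ : Fin 3} (huv : u ≠ v) (hc : c u v = μ)
    (hu : n + m + 1 ≤ (NB c μ u).card) : (NB c μ v).card ≤ m := by
  by_contra h
  push_neg at h
  apply hDS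
  apply existsDS huv hc
  · have := Finset.card_erase_of_mem (a := v) (s := NB c μ u)
    by_cases hv : v ∈ NB c μ u
    · rw [this hv]; omega
    · rw [Finset.erase_eq_of_notMem hv]; omega
  · have hu' : u ∈ NB c μ v := mem_NB.mpr ⟨huv, by rw [← hsym u v]; exact hc⟩
    rw [Finset.card_erase_of_mem hu']; omega
  · -- union contains X = (NB c μ u).erase v
    have hsub : (NB c μ u).erase v ⊆ ((NB c μ u ∪ NB c μ v).erase u).erase v := by
      intro x hx
      have h1 := Finset.mem_of_mem_erase hx
      have h2 := Finset.ne_of_mem_erase hx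
      refine Finset.mem_erase.mpr ⟨h2, Finset.mem_erase.mpr ⟨(mem_NB.mp h1).1, Finset.mem_union_left _ h1⟩⟩
    have hcard := Finset.card_le_card hsub
    have := Finset.card_erase_of_mem (a := v) (s := NB c μ u)
    by_cases hv : v ∈ NB c μ u
    · rw [this hv] at hcard; omega
    · rw [Finset.erase_eq_of_notMem hv] at hcard; omega

/-- Part I sub-lemma: a large set of j-huge, i-tiny vertices is impossible. -/
lemma subPart1 (hsym : IsSymmColoring c) (hDS : ¬ HasMonoDoubleStar c n m)
    (s e : ℕ) (hn : n = 2*s + e) (he : e ≤ 1) (hm : 1 ≤ m) (hnm : 6*m + 7 ≤ n)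
    (hN : 5*s + e + 1 ≤ N)
    {i j k : Fin 3} (hij : i ≠ j) (hik : i ≠ k) (hjk : j ≠ k)
    (A : Finset (Fin N))
    (hA1 : ∀ a ∈ A, n + m + 1 ≤ (NB c j a).card)
    (hA2 : ∀ a ∈ A, (NB c i a).card ≤ m)
    (hA3 : n + m + 1 ≤ 2 * A.card) : False := by
  classical
  have hse : 3*m + 4 ≤ s + e := by omega
  -- (1) no j-edges inside A
  have h1 : ∀ a ∈ A, ∀ a' ∈ A, a ≠ a' → c a a' ≠ j := by
    intro a ha a' ha' hne hcj
    have := factH hsym hDS hne hcj (hA1 a ha)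
    have := hA1 a' ha'
    omega
  -- (3) every a in A has ≥ |A| - 1 - m k-edges inside A, so deg_k ≥ |A|-1-m
  have h3 : ∀ a ∈ A, A.card ≤ ((A.erase a).filter (fun x => c a x = k)).card + m + 1 := by
    intro a ha
    have hsplit : A.erase a ⊆ ((A.erase a).filter (fun x => c a x = k)) ∪ NB c i a := by
      intro x hx
      have hxa : x ≠ a := Finset.ne_of_mem_erase hx
      have hxA : x ∈ A := Finset.mem_of_mem_erase hx
      have hxj : c a x ≠ j := h1 a ha x hxA (Ne.symm hxa)
      rcases fin3_resolve (c a x) i j k hij hik hjk hxj with h | h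
      · exact Finset.mem_union_right _ (mem_NB.mpr ⟨hxa, h⟩)
      · exact Finset.mem_union_left _ (Finset.mem_filter.mpr ⟨hx, h⟩)
    have hc1 := Finset.card_le_card hsplit
    have hc2 := Finset.card_union_le ((A.erase a).filter (fun x => c a x = k)) (NB c i a)
    have hc3 := Finset.card_erase_of_mem ha
    have := hA2 a ha
    omega
  -- (4) no a ∈ A is k-huge
  have h4 : ∀ a ∈ A, (NB c k a).card ≤ n + m := by
    intro a ha
    by_contra hbig
    push_neg at hbig
    have hfil : 1 ≤ ((A.erase a).filter (fun x => c a x = k)).card := by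
      have := h3 a ha; omega
    obtain ⟨a', ha'⟩ := Finset.card_pos.mp hfil
    have ha'A : a' ∈ A := Finset.mem_of_mem_erase (Finset.mem_filter.mp ha').1
    have ha'ne : a ≠ a' := (Finset.ne_of_mem_erase (Finset.mem_filter.mp ha').1).symm
    have hak : c a a' = k := (Finset.mem_filter.mp ha').2
    have htiny := factH hsym hDS ha'ne hak (by omega)
    -- but a' has many k-edges inside A
    have hk' : A.card ≤ ((A.erase a').filter (fun x => c a' x = k)).card + m + 1 := h3 a' ha'A
    have hsub : ((A.erase a').filter (fun x => c a' x = k)) ⊆ NB c k a' := by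
      intro x hx
      have := Finset.mem_filter.mp hx
      exact mem_NB.mpr ⟨(Finset.ne_of_mem_erase this.1), this.2⟩
    have := Finset.card_le_card hsub
    omega
  -- (5) deg_j(a) large
  have h5 : ∀ a ∈ A, N ≤ (NB c j a).card + (n + 2*m + 1) := by
    intro a ha
    have := degsum (c := c) i j k hij hik hjk a
    have := hA2 a ha
    have := h4 a ha
    have hN1 : 1 ≤ N := by omega
    omega
  -- (6) counting j-edges out of A
  set p := (univ \ A).card with hpdef
  have hpN : p + A.card = N := by
    rw [hpdef, Finset.card_sdiff_of_subset (Finset.subset_univ A), Finset.card_univ, Fintype.card_fin]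
    have : A.card ≤ N := by
      calc A.card ≤ (univ : Finset (Fin N)).card := Finset.card_le_card (Finset.subset_univ A)
      _ = N := by rw [Finset.card_univ, Fintype.card_fin]
    omega
  have hcount : A.card * N ≤ p * m + A.card * (n + 2*m + 1) := by
    have hL : A.card * N ≤ (∑ a ∈ A, (NB c j a).card) + A.card * (n + 2*m + 1) := by
      calc A.card * N = ∑ a ∈ A, N := by rw [Finset.sum_const, smul_eq_mul, mul_comm]
      _ ≤ ∑ a ∈ A, ((NB c j a).card + (n + 2*m+1)) := Finset.sum_le_sum (fun a ha => h5 a ha)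
      _ = (∑ a ∈ A, (NB c j a).card) + A.card * (n + 2*m + 1) := by
          rw [Finset.sum_add_distrib, Finset.sum_const, smul_eq_mul]
    have hR : (∑ a ∈ A, (NB c j a).card) ≤ p * m := by
      have hswap : (∑ a ∈ A, (NB c j a).card) = ∑ x ∈ univ \ A, (A.filter (fun a => c a x = j ∧ a ≠ x)).card := by
        have : ∀ a ∈ A, (NB c j a).card = ∑ x ∈ univ \ A, (if c a x = j ∧ a ≠ x then 1 else 0) := by
          intro a ha
          have hNB : NB c j a = (univ \ A).filter (fun x => c a x = j ∧ a ≠ x) := by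
            ext x
            simp only [mem_NB, Finset.mem_filter, Finset.mem_sdiff, Finset.mem_univ, true_and]
            constructor
            · rintro ⟨hxa, hcx⟩
              refine ⟨?_, hcx, Ne.symm hxa⟩
              intro hxA
              exact h1 a ha x hxA (Ne.symm hxa) hcx
            · rintro ⟨hxA, hcx, hax⟩
              exact ⟨Ne.symm hax, hcx⟩
          rw [hNB, Finset.card_filter]
        rw [Finset.sum_congr rfl this, Finset.sum_comm]
        apply Finset.sum_congr rfl
        intro x hx
        rw [Finset.card_filter]
      rw [hswap]
      have hbound : ∀ x ∈ univ \ A, (A.filter (fun a => c a x = j ∧ a ≠ x)).card ≤ m := by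
        intro x hx
        by_cases hpos : (A.filter (fun a => c a x = j ∧ a ≠ x)).card = 0
        · omega
        · have : ∃ a0, a0 ∈ A.filter (fun a => c a x = j ∧ a ≠ x) := by
            apply Finset.card_pos.mp; omega
          obtain ⟨a0, ha0⟩ := this
          have ha0' := Finset.mem_filter.mp ha0
          have hxa0 : c a0 x = j := ha0'.2.1
          have htiny : (NB c j x).card ≤ m :=
            factH hsym hDS ha0'.2.2 hxa0 (hA1 a0 ha0'.1)
          have hsub : A.filter (fun a => c a x = j ∧ a ≠ x) ⊆ NB c j x := by
            intro a ha
            have := Finset.mem_filter.mp ha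
            refine mem_NB.mpr ⟨this.2.2, ?_⟩
            rw [hsym x a]; exact this.2.1
          exact le_trans (Finset.card_le_card hsub) htiny
      exact Finset.sum_le_card_nsmul _ _ m hbound
    omega
  -- final arithmetic contradiction
  have hNval : n + m + 2 ≤ N := by omega
  zify at hcount hA3 hpN hN hnm hn hNval
  set h := (A.card : ℤ)
  set P := (p : ℤ)
  have step1 : h * ((N:ℤ) - n - m - 1) ≤ (N:ℤ) * m := by nlinarith
  have step2 : ((n:ℤ) + m + 1) * ((N:ℤ) - n - m - 1) ≤ 2 * ((N:ℤ) * m) := by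
    have hh : (0:ℤ) ≤ (N:ℤ) - n - m - 1 := by omega
    nlinarith
  have step3 : (2*(N:ℤ)) * ((n:ℤ) - m + 1) ≤ 2*((n:ℤ)+m+1)^2 := by nlinarith
  have h5n : 5*(n:ℤ) - 1 ≤ 2*(N:ℤ) := by omega
  nlinarith [mul_nonneg (by omega : (0:ℤ) ≤ (n:ℤ) - 6*m - 7) (by omega : (0:ℤ) ≤ (n:ℤ)),
             mul_nonneg (by omega : (0:ℤ) ≤ (n:ℤ) - 6*m - 7) (by omega : (0:ℤ) ≤ (m:ℤ)),
             mul_le_mul_of_nonneg_right h5n (by omega : (0:ℤ) ≤ (n:ℤ) - m + 1)]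

end Part1

section Reach
variable {N : ℕ}

/-- one κ-colored step inside S -/
def RelS (c : Fin N → Fin N → Fin 3) (κ : Fin 3) (S : Finset (Fin N)) (a b : Fin N) : Prop :=
  a ∈ S ∧ b ∈ S ∧ c a b = κ ∧ a ≠ b

/-- κ-reachability inside S -/
def ReachS (c : Fin N → Fin N → Fin 3) (κ : Fin 3) (S : Finset (Fin N)) : Fin N → Fin N → Prop :=
  Relation.ReflTransGen (RelS c κ S)

lemma ReachS.refl {c : Fin N → Fin N → Fin 3} {κ : Fin 3} {S : Finset (Fin N)} (x : Fin N) :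
    ReachS c κ S x x := Relation.ReflTransGen.refl

lemma ReachS.trans {c : Fin N → Fin N → Fin 3} {κ : Fin 3} {S : Finset (Fin N)} {x y z : Fin N}
    (h1 : ReachS c κ S x y) (h2 : ReachS c κ S y z) : ReachS c κ S x z :=
  Relation.ReflTransGen.trans h1 h2

lemma ReachS.symm {c : Fin N → Fin N → Fin 3} {κ : Fin 3} {S : Finset (Fin N)}
    (hsym : IsSymmColoring c) {x y : Fin N} (h : ReachS c κ S x y) : ReachS c κ S y x := by
  have hrel : ∀ a b, RelS c κ S a b → RelS c κ S b a := by
    rintro a b ⟨ha, hb, hc, hab⟩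
    exact ⟨hb, ha, by rw [hsym b a]; exact hc, hab.symm⟩
  induction h with
  | refl => exact Relation.ReflTransGen.refl
  | tail hxb hbc ih =>
    exact Relation.ReflTransGen.head (hrel _ _ hbc) ih

lemma ReachS.single {c : Fin N → Fin N → Fin 3} {κ : Fin 3} {S : Finset (Fin N)} {x y : Fin N}
    (h : RelS c κ S x y) : ReachS c κ S x y := Relation.ReflTransGen.single h

lemma ReachS.mem_left {c : Fin N → Fin N → Fin 3} {κ : Fin 3} {S : Finset (Fin N)} {x y : Fin N}
    (hx : x ∈ S) (h : ReachS c κ S x y) : y ∈ S := by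
  induction h with
  | refl => exact hx
  | tail _ hbc _ => exact hbc.2.1

/-- module property: vertices in the same κ-component look the same from outside -/
lemma moduleLemma {c : Fin N → Fin N → Fin 3} {κ : Fin 3} {S : Finset (Fin N)}
    (hGal : ¬ HasRainbowTriangle c) {x y z : Fin N}
    (hxy : ReachS c κ S x y) (hz : z ∈ S) (hxz : ¬ ReachS c κ S x z) :
    c y z = c x z := by
  induction hxy with
  | refl => rfl
  | @tail b y hxb hby ih =>
    -- c b y = κ; show c y z = c b z (= c x z by ih)
    rw [← ih]
    have hzb : z ≠ b := by
      rintro rfl; exact hxz hxb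
    have hzy : z ≠ y := by
      rintro rfl; exact hxz (Relation.ReflTransGen.tail hxb hby)
    have hbS : b ∈ S := hby.1
    have hyS : y ∈ S := hby.2.1
    have hcbz : c b z ≠ κ := by
      intro hk
      exact hxz (Relation.ReflTransGen.tail hxb ⟨hbS, hz, hk, hzb.symm⟩)
    have hcyz : c y z ≠ κ := by
      intro hk
      exact hxz (Relation.ReflTransGen.tail (Relation.ReflTransGen.tail hxb hby) ⟨hyS, hz, hk, hzy.symm⟩)
    by_contra hne
    apply hGal
    refine ⟨b, y, z, hby.2.2.2, hzb.symm, hzy.symm, ?_, ?_, ?_⟩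
    · rw [hby.2.2.1]; exact fun h => hcbz h.symm
    · rw [hby.2.2.1]; exact fun h => hcyz h.symm
    · exact fun h => hne (h.symm ▸ rfl)
end Reach

section LemA
variable {N : ℕ}

lemma fin3_other : ∀ (a b : Fin 3), a ≠ b → ∃ d, d ≠ a ∧ d ≠ b := by decide
lemma fin3_ne : ∀ (a : Fin 3), ∃ b, b ≠ a := by decide

lemma reach_fix {c : Fin N → Fin N → Fin 3} {κ : Fin 3} {S : Finset (Fin N)} {x : Fin N}
    (h : ∀ z, ¬ RelS c κ S x z) {w : Fin N} (hr : ReachS c κ S x w) : w = x := by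
  induction hr with
  | refl => rfl
  | tail hxb hbz ih =>
    subst ih
    exact absurd hbz (h _)

lemma lemA {c : Fin N → Fin N → Fin 3} (hsym : IsSymmColoring c)
    (hGal : ¬ HasRainbowTriangle c) :
    ∀ (t : ℕ) (S : Finset (Fin N)), S.card = t → 2 ≤ t →
    ∃ κ : Fin 3, ∃ x ∈ S, ∃ y ∈ S, ¬ ReachS c κ S x y := by
  intro t
  induction t using Nat.strong_induction_on with
  | _ t ih =>
  intro S hcard ht
  rcases Nat.lt_or_ge t 3 with ht2 | ht3
  · -- base case t = 2
    have ht2' : t = 2 := by omega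
    subst ht2'
    obtain ⟨x, y, hxy, hS⟩ := Finset.card_eq_two.mp hcard
    obtain ⟨κ, hκ⟩ := fin3_ne (c x y)
    have hxS : x ∈ S := by rw [hS]; simp
    have hyS : y ∈ S := by rw [hS]; simp
    refine ⟨κ, x, hxS, y, hyS, fun hr => ?_⟩
    have : y = x := by
      apply reach_fix (fun z hz => ?_) hr
      obtain ⟨-, hzS, hcz, hxz⟩ := hz
      rw [hS] at hzS
      rcases Finset.mem_insert.mp hzS with rfl | hzS
      · exact hxz rfl
      · rw [Finset.mem_singleton] at hzS
        subst hzS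
        exact hκ (hcz ▸ rfl)
    exact hxy this.symm
  · -- step: t ≥ 3
    have hS1 : S.Nonempty := by
      rw [← Finset.card_pos, hcard]; omega
    obtain ⟨x, hxS⟩ := hS1
    set W := S.erase x with hWdef
    have hxW : x ∉ W := Finset.notMem_erase x S
    have hWS : W ⊆ S := Finset.erase_subset x S
    have hWcard : W.card = t - 1 := by rw [hWdef, Finset.card_erase_of_mem hxS, hcard]
    obtain ⟨κ, a, haW, b, hbW, hab⟩ := ih (t-1) (by omega) W hWcard (by omega)
    -- reach in W implies reach in S
    have hmono : ∀ {u v : Fin N}, ReachS c κ W u v → ReachS c κ S u v := by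
      intro u v h
      refine Relation.ReflTransGen.mono ?_ u v h
      rintro p q ⟨hp, hq, h1, h2⟩
      exact ⟨hWS hp, hWS hq, h1, h2⟩
    by_cases hcase : ∃ w ∈ W, ∀ z ∈ W, ReachS c κ W w z → c x z ≠ κ
    · -- the component of w gets no κ-edge from x: κ disconnected in S
      obtain ⟨w, hwW, hwno⟩ := hcase
      have hy : ∃ y ∈ W, ¬ ReachS c κ W w y := by
        by_cases h1 : ReachS c κ W w a
        · by_cases h2 : ReachS c κ W w b
          · exact absurd (((h1.symm hsym).trans h2)) hab
          · exact ⟨b, hbW, h2⟩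
        · exact ⟨a, haW, h1⟩
      obtain ⟨y, hyW, hwy⟩ := hy
      refine ⟨κ, w, hWS hwW, y, hWS hyW, fun hr => ?_⟩
      have hinv : ∀ v, ReachS c κ S w v → v ∈ W ∧ ReachS c κ W w v := by
        intro v hv
        induction hv with
        | refl => exact ⟨hwW, ReachS.refl w⟩
        | @tail p q hwp hpq ihv =>
          obtain ⟨hpW, hwpW⟩ := ihv
          obtain ⟨hpS, hqS, hcpq, hpq'⟩ := hpq
          by_cases hqx : q = x
          · exfalso
            apply hwno p hpW hwpW
            rw [hsym x p, ← hqx]; exact hcpq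
          · have hqW : q ∈ W := Finset.mem_erase.mpr ⟨hqx, hqS⟩
            exact ⟨hqW, Relation.ReflTransGen.tail hwpW ⟨hpW, hqW, hcpq, hpq'⟩⟩
      exact hwy (hinv y hr).2
    · -- every κ-component of W is κ-linked to x
      push_neg at hcase
      have hlink : ∀ w ∈ W, ∃ z ∈ W, ReachS c κ W w z ∧ c x z = κ := by
        intro w hw
        obtain ⟨z, hz1, hz2, hz3⟩ := hcase w hw
        exact ⟨z, hz1, hz2, hz3⟩
      -- (†)
      have hdag : ∀ z w', z ∈ W → w' ∈ W → c x z = κ → ¬ ReachS c κ W z w' →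
          c x w' = κ ∨ c x w' = c z w' := by
        intro z w' hzW hw'W hcxz hnr
        by_contra hcon
        push_neg at hcon
        obtain ⟨h1, h2⟩ := hcon
        have hzw' : z ≠ w' := by rintro rfl; exact hnr (ReachS.refl z)
        have hxz : x ≠ z := by rintro rfl; exact hxW hzW
        have hxw' : x ≠ w' := by rintro rfl; exact hxW hw'W
        have hczw' : c z w' ≠ κ := by
          intro hk
          exact hnr (ReachS.single ⟨hzW, hw'W, hk, hzw'⟩)
        apply hGal
        exact ⟨x, z, w', hxz, hxw', hzw', by rw [hcxz]; exact fun h => h1 h.symm,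
          by rw [hcxz]; exact fun h => hczw' h.symm, h2⟩
      -- all non-κ colors from x to W agree
      have hconf : ∃ γ, γ ≠ κ ∧ ∀ w ∈ W, c x w = κ ∨ c x w = γ := by
        by_cases hallκ : ∀ w ∈ W, c x w = κ
        · obtain ⟨γ, hγ⟩ := fin3_ne κ
          exact ⟨γ, hγ, fun w hw => Or.inl (hallκ w hw)⟩
        · push_neg at hallκ
          obtain ⟨w0, hw0W, hw0⟩ := hallκ
          refine ⟨c x w0, hw0, fun w hwW => ?_⟩
          by_cases hwκ : c x w = κ
          · exact Or.inl hwκ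
          · right
            by_cases hreach : ReachS c κ W w w0
            · -- same component: use a third component
              have hv : ∃ v ∈ W, ¬ ReachS c κ W w v := by
                by_cases h1 : ReachS c κ W w a
                · by_cases h2 : ReachS c κ W w b
                  · exact absurd (((h1.symm hsym).trans h2)) hab
                  · exact ⟨b, hbW, h2⟩
                · exact ⟨a, haW, h1⟩
              obtain ⟨v, hvW, hnv⟩ := hv
              obtain ⟨zv, hzvW, hvzv, hczv⟩ := hlink v hvW
              have hn1 : ¬ ReachS c κ W zv w := by
                intro h
                exact hnv (((hvzv.trans h).symm hsym))
              have hn2 : ¬ ReachS c κ W zv w0 := by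
                intro h
                exact hnv (hreach.trans ((h.symm hsym).trans (hvzv.symm hsym)))
              have e1 : c x w = c zv w := by
                rcases hdag zv w hzvW hwW hczv hn1 with h | h
                · exact absurd h hwκ
                · exact h
              have e2 : c x w0 = c zv w0 := by
                rcases hdag zv w0 hzvW hw0W hczv hn2 with h | h
                · exact absurd h hw0
                · exact h
              have hnwzv : ¬ ReachS c κ W w zv := by
                intro h
                exact hnv (h.trans (hvzv.symm hsym))
              have e3 : c w0 zv = c w zv := moduleLemma hGal hreach hzvW hnwzv
              rw [e1, hsym zv w, ← e3, hsym w0 zv, e2]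
            · obtain ⟨z, hzW, hw0z, hcxz⟩ := hlink w0 hw0W
              have hnzw : ¬ ReachS c κ W z w := fun h => hreach ((hw0z.trans h).symm hsym)
              have e1 : c x w = c z w := by
                rcases hdag z w hzW hwW hcxz hnzw with h | h
                · exact absurd h hwκ
                · exact h
              obtain ⟨z', hz'W, hwz', hcxz'⟩ := hlink w hwW
              have hnz'w0 : ¬ ReachS c κ W z' w0 := fun h => hreach (hwz'.trans h)
              have e2 : c x w0 = c z' w0 := by
                rcases hdag z' w0 hz'W hw0W hcxz' hnz'w0 with h | h
                · exact absurd h hw0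
                · exact h
              have e3 : c z w = c w0 w := moduleLemma hGal hw0z hwW (fun h => hreach (h.symm hsym))
              have e4 : c z' w0 = c w w0 := moduleLemma hGal hwz' hw0W hreach
              rw [e1, e3, hsym w0 w, ← e4, ← e2]
      obtain ⟨γ, hγκ, hγ⟩ := hconf
      obtain ⟨ι, hι1, hι2⟩ := fin3_other κ γ (Ne.symm hγκ)
      refine ⟨ι, x, hxS, a, hWS haW, fun hr => ?_⟩
      have : a = x := by
        apply reach_fix (fun z hz => ?_) hr
        obtain ⟨-, hzS, hcz, hxz⟩ := hz
        have hzW : z ∈ W := Finset.mem_erase.mpr ⟨fun h => hxz h.symm, hzS⟩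
        rcases hγ z hzW with h | h
        · rw [h] at hcz; exact hι1 hcz.symm
        · rw [h] at hcz; exact hι2 hcz.symm
      rw [this] at haW
      exact hxW haW
end LemA

section Cls
variable {N : ℕ}

lemma fin3_or : ∀ (u v w κ : Fin 3), u = κ ∨ v = κ ∨ w = κ ∨ v = u ∨ w = u ∨ v = w := by decide
lemma fin3_exists_other : ∀ κ : Fin 3, ∃ α β, κ ≠ α ∧ κ ≠ β ∧ α ≠ β := by decide

open Classical in
/-- κ-component of x (in the whole graph) -/
noncomputable def clsF (c : Fin N → Fin N → Fin 3) (κ : Fin 3) (x : Fin N) : Finset (Fin N) :=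
  univ.filter (fun y => ReachS c κ univ x y)

open Classical in
lemma mem_clsF {c : Fin N → Fin N → Fin 3} {κ : Fin 3} {x y : Fin N} :
    y ∈ clsF c κ x ↔ ReachS c κ univ x y := by
  simp [clsF]

lemma self_mem_clsF {c : Fin N → Fin N → Fin 3} {κ : Fin 3} {x : Fin N} :
    x ∈ clsF c κ x := mem_clsF.mpr (ReachS.refl x)

lemma NB_subset_clsF {c : Fin N → Fin N → Fin 3} {κ : Fin 3} {x : Fin N} :
    NB c κ x ⊆ clsF c κ x := by
  intro z hz
  rw [mem_NB] at hz
  exact mem_clsF.mpr (ReachS.single ⟨Finset.mem_univ x, Finset.mem_univ z, hz.2, (hz.1).symm⟩)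

lemma q_ge_deg {c : Fin N → Fin N → Fin 3} {κ : Fin 3} {x : Fin N} :
    (NB c κ x).card + 1 ≤ (clsF c κ x).card := by
  have hsub : insert x (NB c κ x) ⊆ clsF c κ x := by
    intro z hz
    rcases Finset.mem_insert.mp hz with rfl | hz
    · exact self_mem_clsF
    · exact NB_subset_clsF hz
  have := Finset.card_le_card hsub
  rw [Finset.card_insert_of_notMem self_not_mem_NB] at this
  omega

lemma clsF_subset_filter {c : Fin N → Fin N → Fin 3} {κ : Fin 3}
    (hsym : IsSymmColoring c) (hGal : ¬ HasRainbowTriangle c) {x y : Fin N}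
    (hxy : ¬ ReachS c κ univ x y) :
    clsF c κ y ⊆ (univ \ clsF c κ x).filter (fun z => c x z = c x y) := by
  intro z hz
  have hyz : ReachS c κ univ y z := mem_clsF.mp hz
  have hnzx : z ∉ clsF c κ x := by
    intro hzx
    exact hxy ((mem_clsF.mp hzx).trans (hyz.symm hsym))
  refine Finset.mem_filter.mpr ⟨Finset.mem_sdiff.mpr ⟨Finset.mem_univ z, hnzx⟩, ?_⟩
  have hnyx : ¬ ReachS c κ univ y x := fun h => hxy (h.symm hsym)
  have := moduleLemma hGal hyz (Finset.mem_univ x) hnyx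
  rw [hsym x z, hsym x y, this]

open Classical in
/-- sum of the sizes of the μ-colored parts seen from x -/
noncomputable def Dv (c : Fin N → Fin N → Fin 3) (κ μ : Fin 3) (x : Fin N) : ℕ :=
  ((univ \ clsF c κ x).filter (fun z => c x z = μ)).card

lemma outside_ne_kappa {c : Fin N → Fin N → Fin 3} {κ : Fin 3} {x z : Fin N}
    (hz : z ∉ clsF c κ x) : z ≠ x ∧ c x z ≠ κ := by
  constructor
  · rintro rfl; exact hz self_mem_clsF
  · intro hc
    exact hz (NB_subset_clsF (mem_NB.mpr ⟨fun h => hz (h ▸ self_mem_clsF), hc⟩))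

lemma Dv_sum {c : Fin N → Fin N → Fin 3} {κ α β : Fin 3}
    (hκα : κ ≠ α) (hκβ : κ ≠ β) (hαβ : α ≠ β) (x : Fin N) :
    Dv c κ α x + Dv c κ β x + (clsF c κ x).card = N := by
  classical
  have hdisj : Disjoint ((univ \ clsF c κ x).filter (fun z => c x z = α))
      ((univ \ clsF c κ x).filter (fun z => c x z = β)) := by
    refine Finset.disjoint_left.mpr (fun z hz hz' => ?_)
    exact hαβ ((Finset.mem_filter.mp hz).2 ▸ (Finset.mem_filter.mp hz').2 ▸ rfl)
  have hun : ((univ \ clsF c κ x).filter (fun z => c x z = α)) ∪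
      ((univ \ clsF c κ x).filter (fun z => c x z = β)) = univ \ clsF c κ x := by
    ext z
    simp only [Finset.mem_union, Finset.mem_filter]
    constructor
    · rintro (h | h) <;> exact h.1
    · intro hz
      have hne := (outside_ne_kappa (Finset.mem_sdiff.mp hz).2).2
      rcases fin3_resolve (c x z) α κ β (Ne.symm hκα) hαβ hκβ hne with h | h
      · exact Or.inl ⟨hz, h⟩
      · exact Or.inr ⟨hz, h⟩
  have hcard := Finset.card_union_of_disjoint hdisj
  rw [hun] at hcard
  have hsd : (univ \ clsF c κ x).card = N - (clsF c κ x).card := by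
    rw [Finset.card_sdiff_of_subset (Finset.subset_univ _), Finset.card_univ, Fintype.card_fin]
  have hle : (clsF c κ x).card ≤ N := by
    have := Finset.card_le_card (Finset.subset_univ (clsF c κ x))
    rwa [Finset.card_univ, Fintype.card_fin] at this
  have e1 : Dv c κ α x = ((univ \ clsF c κ x).filter (fun z => c x z = α)).card := rfl
  have e2 : Dv c κ β x = ((univ \ clsF c κ x).filter (fun z => c x z = β)).card := rfl
  omega

lemma Dv_le_NB {c : Fin N → Fin N → Fin 3} {κ μ : Fin 3} {x : Fin N} :
    Dv c κ μ x ≤ (NB c μ x).card := by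
  classical
  apply Finset.card_le_card
  intro z hz
  have h := Finset.mem_filter.mp hz
  exact mem_NB.mpr ⟨(outside_ne_kappa (Finset.mem_sdiff.mp h.1).2).1, h.2⟩

open Classical in
noncomputable def reprF (c : Fin N → Fin N → Fin 3) (κ : Fin 3) (x : Fin N) : Fin N :=
  (clsF c κ x).min' ⟨x, self_mem_clsF⟩

lemma reach_reprF {c : Fin N → Fin N → Fin 3} {κ : Fin 3} {x : Fin N} :
    ReachS c κ univ x (reprF c κ x) := mem_clsF.mp ((clsF c κ x).min'_mem _)

lemma clsF_eq_of_reach {c : Fin N → Fin N → Fin 3} {κ : Fin 3}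
    (hsym : IsSymmColoring c) {x y : Fin N} (h : ReachS c κ univ x y) :
    clsF c κ x = clsF c κ y := by
  ext z
  rw [mem_clsF, mem_clsF]
  exact ⟨fun h' => (h.symm hsym).trans h', fun h' => h.trans h'⟩

lemma reprF_eq_of_reach {c : Fin N → Fin N → Fin 3} {κ : Fin 3}
    (hsym : IsSymmColoring c) {x y : Fin N} (h : ReachS c κ univ x y) :
    reprF c κ x = reprF c κ y := by
  have hcls := clsF_eq_of_reach hsym h
  unfold reprF
  congr 1

lemma reprF_idem {c : Fin N → Fin N → Fin 3} {κ : Fin 3}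
    (hsym : IsSymmColoring c) (x : Fin N) :
    reprF c κ (reprF c κ x) = reprF c κ x :=
  (reprF_eq_of_reach hsym (reach_reprF)).symm

end Cls

section Part2
variable {N : ℕ} {c : Fin N → Fin N → Fin 3} {n m s e : ℕ}

lemma fin3_or2 : ∀ v1 v2 κ μ : Fin 3, κ = μ ∨ v1 = κ ∨ v1 = μ ∨ v2 = κ ∨ v2 = μ ∨ v1 = v2 := by decide

/-- from no-huge: every color degree is decent -/
lemma deg_lower (hnoH : ∀ (u : Fin N) (μ : Fin 3), (NB c μ u).card ≤ n + m)
    (u : Fin N) (μ : Fin 3) : N ≤ (NB c μ u).card + 2*(n+m) + 1 := by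
  obtain ⟨i, j, hμi, hμj, hij⟩ := fin3_exists_other μ
  have hd := degsum (c := c) μ i j hμi hμj hij u
  have h1 := hnoH u i
  have h2 := hnoH u j
  have h3 := deg_le (c := c) μ u
  omega

/-- main part II lemma: no-huge case is impossible -/
lemma part2 (hsym : IsSymmColoring c) (hGal : ¬ HasRainbowTriangle c)
    (hDS : ¬ HasMonoDoubleStar c n m)
    (hn : n = 2*s + e) (he : e ≤ 1) (hm : 1 ≤ m) (hnm : 6*m + 7 ≤ n)
    (hN : 5*s + e + 1 ≤ N)
    (hnoH : ∀ (u : Fin N) (μ : Fin 3), (NB c μ u).card ≤ n + m) : False := by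
  classical
  have hse : 3*m + 4 ≤ s + e := by omega
  have hN2 : (univ : Finset (Fin N)).card = N := by rw [Finset.card_univ, Fintype.card_fin]
  obtain ⟨κ, x0, -, y0, -, hxy0⟩ := lemA hsym hGal N univ hN2 (by omega)
  obtain ⟨α, β, hκα, hκβ, hαβ⟩ := fin3_exists_other κ
  -- abbreviations
  set q : Fin N → ℕ := fun x => (clsF c κ x).card with hqdef
  -- q is at least N - 2(n+m)
  have hq_big : ∀ x, N ≤ q x + 2*(n+m) := by
    intro x
    have h1 := q_ge_deg (c := c) (κ := κ) (x := x)
    have h2 := deg_lower (n := n) (m := m) hnoH x κ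
    have hb : q x = (clsF c κ x).card := rfl
    omega
  -- the key degree bound
  have claimD : ∀ (x : Fin N) (μ : Fin 3), μ ≠ κ → Dv c κ μ x ≤ n := by
    intro x μ hμκ
    by_contra hbig
    push_neg at hbig
    set F := ((univ \ clsF c κ x).filter (fun z => c x z = μ)) with hFdef
    have hFcard : n + 1 ≤ F.card := hbig
    obtain ⟨y, hyF⟩ := Finset.card_pos.mp (by omega : 0 < F.card)
    have hyout : y ∉ clsF c κ x := (Finset.mem_sdiff.mp (Finset.mem_filter.mp hyF).1).2
    have hyc : c x y = μ := (Finset.mem_filter.mp hyF).2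
    have hxy : x ≠ y := Ne.symm (outside_ne_kappa hyout).1
    have hnR : ¬ ReachS c κ univ x y := fun h => hyout (mem_clsF.mpr h)
    apply hDS
    have hFNB : F ⊆ NB c μ x := by
      intro z hz
      have h := Finset.mem_filter.mp hz
      exact mem_NB.mpr ⟨(outside_ne_kappa (Finset.mem_sdiff.mp h.1).2).1, h.2⟩
    apply existsDS hxy hyc
    · -- n ≤ |NB μ x erase y|
      have : F.erase y ⊆ (NB c μ x).erase y := fun z hz =>
        Finset.mem_erase.mpr ⟨Finset.ne_of_mem_erase hz, hFNB (Finset.mem_of_mem_erase hz)⟩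
      have hc1 := Finset.card_le_card this
      rw [Finset.card_erase_of_mem hyF] at hc1
      omega
    · -- m ≤ |NB μ y erase x|
      have hdl := deg_lower (n := n) (m := m) hnoH y μ
      have hxNB : ((NB c μ y).erase x).card + 1 ≥ (NB c μ y).card := by
        by_cases hx : x ∈ NB c μ y
        · rw [Finset.card_erase_of_mem hx]; omega
        · rw [Finset.erase_eq_of_notMem hx]; omega
      omega
    · -- n + m ≤ union bound
      have hsub : (F.erase y) ∪ ((clsF c κ x).erase x) ⊆
          ((NB c μ x ∪ NB c μ y).erase x).erase y := by
        intro z hz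
        rcases Finset.mem_union.mp hz with hz | hz
        · have hz1 := Finset.ne_of_mem_erase hz
          have hz2 := hFNB (Finset.mem_of_mem_erase hz)
          refine Finset.mem_erase.mpr ⟨hz1, Finset.mem_erase.mpr ⟨(mem_NB.mp hz2).1, Finset.mem_union_left _ hz2⟩⟩
        · have hz1 := Finset.ne_of_mem_erase hz
          have hz2 : z ∈ clsF c κ x := Finset.mem_of_mem_erase hz
          have hzy : z ≠ y := by rintro rfl; exact hyout hz2
          have hzNB : z ∈ NB c μ y := by
            have hRxz : ReachS c κ univ x z := mem_clsF.mp hz2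
            have hmod := moduleLemma hGal hRxz (Finset.mem_univ y) hnR
            refine mem_NB.mpr ⟨hzy, ?_⟩
            rw [hsym y z, hmod]; exact hyc
          exact Finset.mem_erase.mpr ⟨hzy, Finset.mem_erase.mpr ⟨hz1, Finset.mem_union_right _ hzNB⟩⟩
      have hdisj : Disjoint (F.erase y) ((clsF c κ x).erase x) := by
        refine Finset.disjoint_left.mpr (fun z hz hz' => ?_)
        have h1 := (Finset.mem_sdiff.mp (Finset.mem_filter.mp (Finset.mem_of_mem_erase hz)).1).2
        exact h1 (Finset.mem_of_mem_erase hz')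
      have hcard := Finset.card_le_card hsub
      rw [Finset.card_union_of_disjoint hdisj] at hcard
      have hc1 : F.card - 1 ≤ (F.erase y).card := by
        rw [Finset.card_erase_of_mem hyF]
      have hc2 : ((clsF c κ x).erase x).card = (clsF c κ x).card - 1 :=
        Finset.card_erase_of_mem self_mem_clsF
      have hq := hq_big x
      have hb : q x = (clsF c κ x).card := rfl
      have hF2 : F.card = Dv c κ μ x := rfl
      omega
  -- parts are ≤ n
  have claim_q_le : ∀ x y : Fin N, ¬ ReachS c κ univ x y → q y ≤ n := by
    intro x y hxy
    have hsub := clsF_subset_filter hsym hGal hxy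
    have hc := Finset.card_le_card hsub
    have hne : c x y ≠ κ := by
      have hyout : y ∉ clsF c κ x := fun h => hxy (mem_clsF.mp h)
      exact (outside_ne_kappa hyout).2
    exact le_trans hc (claimD x (c x y) hne)
  -- q ≥ N - 2n
  have hq_ge : ∀ x : Fin N, N ≤ q x + 2*n := by
    intro x
    have h0 := Dv_sum (c := c) hκα hκβ hαβ x
    have h1 := claimD x α (Ne.symm hκα)
    have h2 := claimD x β (Ne.symm hκβ)
    have hb : q x = (clsF c κ x).card := rfl
    omega
  -- cherry bound
  have cherry : ∀ x r r' : Fin N, ¬ ReachS c κ univ x r → ¬ ReachS c κ univ x r' →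
      ¬ ReachS c κ univ r r' → c x r = c x r' → q r + q r' ≤ n := by
    intro x r r' h1 h2 h3 hcol
    have hs1 := clsF_subset_filter hsym hGal h1
    have hs2 := clsF_subset_filter hsym hGal h2
    rw [← hcol] at hs2
    have hdisj : Disjoint (clsF c κ r) (clsF c κ r') := by
      refine Finset.disjoint_left.mpr (fun z hz hz' => ?_)
      exact h3 ((mem_clsF.mp hz).trans ((mem_clsF.mp hz').symm hsym))
    have hsub : clsF c κ r ∪ clsF c κ r' ⊆
        (univ \ clsF c κ x).filter (fun z => c x z = c x r) :=
      Finset.union_subset hs1 hs2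
    have hcard := Finset.card_le_card hsub
    rw [Finset.card_union_of_disjoint hdisj] at hcard
    have hne : c x r ≠ κ := by
      have : r ∉ clsF c κ x := fun h => h1 (mem_clsF.mp h)
      exact (outside_ne_kappa this).2
    exact le_trans hcard (claimD x (c x r) hne)
  -- no three parts in one color
  have no_three : ∀ x r1 r2 r3 : Fin N, ¬ ReachS c κ univ x r1 → ¬ ReachS c κ univ x r2 →
      ¬ ReachS c κ univ x r3 → ¬ ReachS c κ univ r1 r2 → ¬ ReachS c κ univ r1 r3 →
      ¬ ReachS c κ univ r2 r3 → c x r1 = c x r2 → c x r1 = c x r3 → False := by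
    intro x r1 r2 r3 h1 h2 h3 h12 h13 h23 e12 e13
    have hs1 := clsF_subset_filter hsym hGal h1
    have hs2 := clsF_subset_filter hsym hGal h2
    have hs3 := clsF_subset_filter hsym hGal h3
    rw [← e12] at hs2
    rw [← e13] at hs3
    have hd12 : Disjoint (clsF c κ r1) (clsF c κ r2) :=
      Finset.disjoint_left.mpr (fun z hz hz' => h12 ((mem_clsF.mp hz).trans ((mem_clsF.mp hz').symm hsym)))
    have hd13 : Disjoint (clsF c κ r1) (clsF c κ r3) :=
      Finset.disjoint_left.mpr (fun z hz hz' => h13 ((mem_clsF.mp hz).trans ((mem_clsF.mp hz').symm hsym)))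
    have hd23 : Disjoint (clsF c κ r2) (clsF c κ r3) :=
      Finset.disjoint_left.mpr (fun z hz hz' => h23 ((mem_clsF.mp hz).trans ((mem_clsF.mp hz').symm hsym)))
    have hsub : (clsF c κ r1 ∪ clsF c κ r2) ∪ clsF c κ r3 ⊆
        (univ \ clsF c κ x).filter (fun z => c x z = c x r1) :=
      Finset.union_subset (Finset.union_subset hs1 hs2) hs3
    have hcard := Finset.card_le_card hsub
    rw [Finset.card_union_of_disjoint (Finset.disjoint_union_left.mpr ⟨hd13, hd23⟩),
      Finset.card_union_of_disjoint hd12] at hcard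
    have hne : c x r1 ≠ κ := by
      have : r1 ∉ clsF c κ x := fun h => h1 (mem_clsF.mp h)
      exact (outside_ne_kappa this).2
    have hD := claimD x (c x r1) hne
    have hg1 := hq_ge r1
    have hg2 := hq_ge r2
    have hg3 := hq_ge r3
    have hDD : Dv c κ (c x r1) x = ((univ \ clsF c κ x).filter (fun z => c x z = c x r1)).card := rfl
    have hb1 : q r1 = (clsF c κ r1).card := rfl
    have hb2 : q r2 = (clsF c κ r2).card := rfl
    have hb3 : q r3 = (clsF c κ r3).card := rfl
    -- 3(N - 2n) ≤ n impossible
    omega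
  -- representatives
  set reps : Finset (Fin N) := univ.image (reprF c κ) with hrepsdef
  have hreps_eq : ∀ r ∈ reps, reprF c κ r = r := by
    intro r hr
    obtain ⟨x, -, rfl⟩ := Finset.mem_image.mp hr
    exact reprF_idem hsym x
  have hreps_ne : ∀ r ∈ reps, ∀ r' ∈ reps, r ≠ r' → ¬ ReachS c κ univ r r' := by
    intro r hr r' hr' hne h
    exact hne (by rw [← hreps_eq r hr, ← hreps_eq r' hr', reprF_eq_of_reach hsym h])
  have hcls_mem : ∀ x : Fin N, x ∈ clsF c κ (reprF c κ x) :=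
    fun x => mem_clsF.mpr ((reach_reprF (x := x)).symm hsym)
  have hps : ∑ r ∈ reps, q r = N := by
    have hdisj : ∀ r ∈ reps, ∀ r' ∈ reps, r ≠ r' → Disjoint (clsF c κ r) (clsF c κ r') := by
      intro r hr r' hr' hne
      refine Finset.disjoint_left.mpr (fun z hz hz' => ?_)
      exact hreps_ne r hr r' hr' hne ((mem_clsF.mp hz).trans ((mem_clsF.mp hz').symm hsym))
    have hbU : reps.biUnion (clsF c κ) = univ := by
      apply Finset.Subset.antisymm
      · intro x _; exact Finset.mem_univ x
      · intro x _
        exact Finset.mem_biUnion.mpr ⟨reprF c κ x, Finset.mem_image.mpr ⟨x, Finset.mem_univ x, rfl⟩, hcls_mem x⟩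
    calc ∑ r ∈ reps, q r = (reps.biUnion (clsF c κ)).card := (Finset.card_biUnion hdisj).symm
    _ = N := by rw [hbU, hN2]
  have hp2 : 2 ≤ reps.card := by
    have hne : reprF c κ x0 ≠ reprF c κ y0 := by
      intro h
      apply hxy0
      exact (reach_reprF).trans (h ▸ (reach_reprF (x := y0)).symm hsym)
    exact Finset.one_lt_card.mpr ⟨reprF c κ x0, Finset.mem_image.mpr ⟨x0, Finset.mem_univ _, rfl⟩,
      reprF c κ y0, Finset.mem_image.mpr ⟨y0, Finset.mem_univ _, rfl⟩, hne⟩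
  -- colors between distinct reps are not κ
  have hcol_ne : ∀ r ∈ reps, ∀ r' ∈ reps, r ≠ r' → c r r' ≠ κ := by
    intro r hr r' hr' hne
    have := hreps_ne r hr r' hr' hne
    have hout : r' ∉ clsF c κ r := fun h => this (mem_clsF.mp h)
    exact (outside_ne_kappa hout).2
  -- case analysis on the number of parts
  rcases Nat.lt_or_ge reps.card 6 with hp6 | hp6
  · interval_cases hp : reps.card
    · -- p = 2
      obtain ⟨r1, r2, hne, hrepseq⟩ := Finset.card_eq_two.mp hp
      have hr1 : r1 ∈ reps := by rw [hrepseq]; simp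
      have hr2 : r2 ∈ reps := by rw [hrepseq]; simp
      have hsum : q r1 + q r2 = N := by
        rw [← hps, hrepseq, Finset.sum_pair hne]
      have h1 : q r1 ≤ n := claim_q_le r2 r1 (hreps_ne r2 hr2 r1 hr1 hne.symm)
      have h2 : q r2 ≤ n := claim_q_le r1 r2 (hreps_ne r1 hr1 r2 hr2 hne)
      omega
    · -- p = 3
      obtain ⟨r1, r2, r3, h12, h13, h23, hrepseq⟩ := Finset.card_eq_three.mp hp
      have hr1 : r1 ∈ reps := by rw [hrepseq]; simp
      have hr2 : r2 ∈ reps := by rw [hrepseq]; simp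
      have hr3 : r3 ∈ reps := by rw [hrepseq]; simp
      have hsum : q r1 + q r2 + q r3 = N := by
        rw [← hps, hrepseq]
        rw [Finset.sum_insert (by simp [h12, h13]), Finset.sum_pair h23]
        ring
      have hR12 := hreps_ne r1 hr1 r2 hr2 h12
      have hR13 := hreps_ne r1 hr1 r3 hr3 h13
      have hR23 := hreps_ne r2 hr2 r3 hr3 h23
      have hq1 : q r1 ≤ n := claim_q_le r2 r1 (fun h => hR12 (h.symm hsym))
      have hq2 : q r2 ≤ n := claim_q_le r1 r2 hR12
      have hq3 : q r3 ≤ n := claim_q_le r1 r3 hR13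
      by_cases hA : c r1 r2 = c r1 r3
      · have := cherry r1 r2 r3 hR12 hR13 hR23 hA
        omega
      · by_cases hB : c r2 r1 = c r2 r3
        · have := cherry r2 r1 r3 (fun h => hR12 (h.symm hsym)) hR23 hR13 hB
          omega
        · have hC : c r3 r1 = c r3 r2 := by
            have k1 : c r1 r2 ≠ κ := hcol_ne r1 hr1 r2 hr2 h12
            have k2 : c r1 r3 ≠ κ := hcol_ne r1 hr1 r3 hr3 h13
            have k3 : c r2 r3 ≠ κ := hcol_ne r2 hr2 r3 hr3 h23
            rcases fin3_or (c r1 r2) (c r1 r3) (c r2 r3) κ with h|h|h|h|h|h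
            · exact absurd h k1
            · exact absurd h k2
            · exact absurd h k3
            · exact absurd h.symm hA
            · exact absurd (by rw [hsym r2 r1, ← h]) hB
            · rw [hsym r3 r1, hsym r3 r2]; exact h
          have := cherry r3 r1 r2 (fun h => hR13 (h.symm hsym)) (fun h => hR23 (h.symm hsym)) hR12 hC
          omega
    · -- p = 4
      obtain ⟨r1, hr1⟩ := Finset.card_pos.mp (by omega : 0 < reps.card)
      set E3 := reps.erase r1 with hE3def
      have hE3card : E3.card = 3 := by
        rw [hE3def, Finset.card_erase_of_mem hr1, hp]
      obtain ⟨x, y, z, hxy, hxz, hyz, hE3eq⟩ := Finset.card_eq_three.mp hE3card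
      have hmemE : ∀ t ∈ E3, t ∈ reps ∧ t ≠ r1 :=
        fun t ht => ⟨Finset.mem_of_mem_erase ht, Finset.ne_of_mem_erase ht⟩
      have hx' := hmemE x (by rw [hE3eq]; simp)
      have hy' := hmemE y (by rw [hE3eq]; simp)
      have hz' := hmemE z (by rw [hE3eq]; simp)
      have hsum4 : q r1 + (q x + q y + q z) = N := by
        have h1 : ∑ r ∈ reps.erase r1, q r + q r1 = ∑ r ∈ reps, q r :=
          Finset.sum_erase_add reps q hr1
        have h2 : ∑ r ∈ reps.erase r1, q r = q x + q y + q z := by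
          rw [← hE3def, hE3eq, Finset.sum_insert (by simp [hxy, hxz]), Finset.sum_pair hyz]
          ring
        omega
      have inner : ∀ u v w : Fin N, u ∈ reps → v ∈ reps → w ∈ reps →
          u ≠ r1 → v ≠ r1 → w ≠ r1 → u ≠ v → u ≠ w → v ≠ w →
          c r1 u = c r1 v → False := by
        intro u v w hu hv hw hur hvr hwr huv huw hvw hcol
        have hRr1u := hreps_ne r1 hr1 u hu (Ne.symm hur)
        have hRr1v := hreps_ne r1 hr1 v hv (Ne.symm hvr)
        have hRr1w := hreps_ne r1 hr1 w hw (Ne.symm hwr)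
        have hRuv := hreps_ne u hu v hv huv
        have hRuw := hreps_ne u hu w hw huw
        have hRvw := hreps_ne v hv w hw hvw
        have hqsum : q u + q v + q w + q r1 = N := by
          have hval : ({u, v, w, r1} : Finset (Fin N)) ⊆ reps := by
            intro t ht
            simp only [Finset.mem_insert, Finset.mem_singleton] at ht
            rcases ht with rfl | rfl | rfl | rfl <;> assumption
          have hcard4 : ({u, v, w, r1} : Finset (Fin N)).card = 4 := by
            rw [Finset.card_insert_of_notMem (by simp [huv, huw, hur]),
              Finset.card_insert_of_notMem (by simp [hvw, hvr]),
              Finset.card_insert_of_notMem (by simp [hwr])]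
            simp
          have heq : ({u, v, w, r1} : Finset (Fin N)) = reps :=
            Finset.eq_of_subset_of_card_le hval (by omega)
          have : ∑ r ∈ ({u, v, w, r1} : Finset (Fin N)), q r = N := by rw [heq, hps]
          rw [Finset.sum_insert (by simp [huv, huw, hur]),
            Finset.sum_insert (by simp [hvw, hvr]),
            Finset.sum_insert (by simp [hwr]), Finset.sum_singleton] at this
          omega
        have hc1 : q u + q v ≤ n := cherry r1 u v hRr1u hRr1v hRuv hcol
        have hw1 : c r1 w ≠ c r1 u := by
          intro h
          exact no_three r1 u v w hRr1u hRr1v hRr1w hRuv hRuw hRvw hcol h.symm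
        by_cases hcuw : c u w = c u r1
        · have hc2 : q w + q r1 ≤ n :=
            cherry u w r1 hRuw (fun h => hRr1u (h.symm hsym)) (fun h => hRr1w (h.symm hsym)) hcuw
          omega
        · by_cases hcvw : c v w = c v r1
          · have hc2 : q w + q r1 ≤ n :=
              cherry v w r1 hRvw (fun h => hRr1v (h.symm hsym)) (fun h => hRr1w (h.symm hsym)) hcvw
            omega
          · -- w sees u, v, r1 in the same color
            set μ := c r1 u with hμdef
            have hμκ : μ ≠ κ := hcol_ne r1 hr1 u hu (Ne.symm hur)
            have k1 : c w u ≠ κ := hcol_ne w hw u hu (Ne.symm huw)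
            have k2 : c w v ≠ κ := hcol_ne w hw v hv (Ne.symm hvw)
            have k3 : c w r1 ≠ κ := hcol_ne w hw r1 hr1 hwr
            have g1 : c w u ≠ μ := by
              rw [hsym w u]
              intro h
              exact hcuw (by rw [h, hμdef, hsym r1 u])
            have g2 : c w v ≠ μ := by
              rw [hsym w v]
              intro h
              exact hcvw (by rw [h, hcol, hsym r1 v])
            have g3 : c w r1 ≠ μ := by
              rw [hsym w r1]
              exact hw1
            have e12 : c w u = c w v := by
              rcases fin3_or2 (c w u) (c w v) κ μ with h|h|h|h|h|h
              · exact absurd h.symm hμκ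
              · exact absurd h k1
              · exact absurd h g1
              · exact absurd h k2
              · exact absurd h g2
              · exact h
            have e13 : c w u = c w r1 := by
              rcases fin3_or2 (c w u) (c w r1) κ μ with h|h|h|h|h|h
              · exact absurd h.symm hμκ
              · exact absurd h k1
              · exact absurd h g1
              · exact absurd h k3
              · exact absurd h g3
              · exact h
            exact no_three w u v r1 (fun h => hRuw (h.symm hsym)) (fun h => hRvw (h.symm hsym))
              (fun h => hRr1w (h.symm hsym)) hRuv (fun h => hRr1u (h.symm hsym))
              (fun h => hRr1v (h.symm hsym)) e12 e13
      have kx : c r1 x ≠ κ := hcol_ne r1 hr1 x hx'.1 (Ne.symm hx'.2)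
      have ky : c r1 y ≠ κ := hcol_ne r1 hr1 y hy'.1 (Ne.symm hy'.2)
      have kz : c r1 z ≠ κ := hcol_ne r1 hr1 z hz'.1 (Ne.symm hz'.2)
      rcases fin3_or2 (c r1 x) (c r1 y) κ (c r1 z) with h|h|h|h|h|h
      · exact absurd h.symm kz
      · exact absurd h kx
      · exact inner x z y hx'.1 hz'.1 hy'.1 hx'.2 hz'.2 hy'.2 hxz hxy hyz.symm h
      · exact absurd h ky
      · exact inner y z x hy'.1 hz'.1 hx'.1 hy'.2 hz'.2 hx'.2 hyz hxy.symm hxz.symm h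
      · exact inner x y z hx'.1 hy'.1 hz'.1 hx'.2 hy'.2 hz'.2 hxy hxz hyz h
    · -- p = 5
      have hrepsne : reps.Nonempty := Finset.card_pos.mp (by omega)
      obtain ⟨r0, hr0, hmax⟩ := Finset.exists_max_image reps q hrepsne
      have pairbound : ∀ r' ∈ reps, r' ≠ r0 → q r' + q r0 ≤ n := by
        intro r' hr' hne
        have hO : ((reps.erase r0).erase r').card = 3 := by
          rw [Finset.card_erase_of_mem (Finset.mem_erase.mpr ⟨hne, hr'⟩),
            Finset.card_erase_of_mem hr0, hp]
        obtain ⟨x1, x2, x3, h12, h13, h23, hOeq⟩ := Finset.card_eq_three.mp hO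
        have hmemO : ∀ t ∈ (reps.erase r0).erase r', t ∈ reps ∧ t ≠ r0 ∧ t ≠ r' :=
          fun t ht => ⟨Finset.mem_of_mem_erase (Finset.mem_of_mem_erase ht),
            Finset.ne_of_mem_erase (Finset.mem_of_mem_erase ht), Finset.ne_of_mem_erase ht⟩
        have hm1 := hmemO x1 (by rw [hOeq]; simp)
        have hm2 := hmemO x2 (by rw [hOeq]; simp)
        have hm3 := hmemO x3 (by rw [hOeq]; simp)
        have hcherry : ∃ t, t ∈ reps ∧ t ≠ r0 ∧ t ≠ r' ∧ c t r' = c t r0 := by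
          by_contra hno
          push_neg at hno
          have finish : ∀ u v' : Fin N, u ∈ reps → u ≠ r0 → u ≠ r' → v' ∈ reps → v' ≠ r0 →
              v' ≠ r' → u ≠ v' → c r' u = c r' v' → False := by
            intro u v' hu hur0 hur' hv' hvr0 hvr' huv hcc
            set μ := c r' u with hμdef
            have hμκ : μ ≠ κ := hcol_ne r' hr' u hu (Ne.symm hur')
            have hRr'u := hreps_ne r' hr' u hu (Ne.symm hur')
            have hRr'v := hreps_ne r' hr' v' hv' (Ne.symm hvr')
            have hRr'r0 := hreps_ne r' hr' r0 hr0 hne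
            have hRuv := hreps_ne u hu v' hv' huv
            have hRur0 := hreps_ne u hu r0 hr0 hur0
            have hRvr0 := hreps_ne v' hv' r0 hr0 hvr0
            have hner0 : c r' r0 ≠ μ := by
              intro h
              exact no_three r' u v' r0 hRr'u hRr'v hRr'r0 hRuv hRur0 hRvr0 hcc h.symm
            have g1 : c r0 u ≠ μ := by
              rw [hsym r0 u]
              intro h
              apply hno u hu hur0 hur'
              rw [hsym u r', ← hμdef, ← h]
            have g2 : c r0 v' ≠ μ := by
              rw [hsym r0 v']
              intro h
              apply hno v' hv' hvr0 hvr'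
              rw [hsym v' r', ← hcc, h]
            have g3 : c r0 r' ≠ μ := by
              rw [hsym r0 r']
              exact hner0
            have k1 : c r0 u ≠ κ := hcol_ne r0 hr0 u hu (Ne.symm hur0)
            have k2 : c r0 v' ≠ κ := hcol_ne r0 hr0 v' hv' (Ne.symm hvr0)
            have k3 : c r0 r' ≠ κ := hcol_ne r0 hr0 r' hr' (Ne.symm hne)
            have e12 : c r0 u = c r0 v' := by
              rcases fin3_or2 (c r0 u) (c r0 v') κ μ with h|h|h|h|h|h
              · exact absurd h.symm hμκ
              · exact absurd h k1
              · exact absurd h g1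
              · exact absurd h k2
              · exact absurd h g2
              · exact h
            have e13 : c r0 u = c r0 r' := by
              rcases fin3_or2 (c r0 u) (c r0 r') κ μ with h|h|h|h|h|h
              · exact absurd h.symm hμκ
              · exact absurd h k1
              · exact absurd h g1
              · exact absurd h k3
              · exact absurd h g3
              · exact h
            exact no_three r0 u v' r' (fun h => hRur0 (h.symm hsym)) (fun h => hRvr0 (h.symm hsym))
              (fun h => hRr'r0 (h.symm hsym)) hRuv (fun h => hRr'u (h.symm hsym))
              (fun h => hRr'v (h.symm hsym)) e12 e13
          have kk1 : c r' x1 ≠ κ := hcol_ne r' hr' x1 hm1.1 (Ne.symm hm1.2.2)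
          have kk2 : c r' x2 ≠ κ := hcol_ne r' hr' x2 hm2.1 (Ne.symm hm2.2.2)
          have kk3 : c r' x3 ≠ κ := hcol_ne r' hr' x3 hm3.1 (Ne.symm hm3.2.2)
          rcases fin3_or2 (c r' x1) (c r' x2) κ (c r' x3) with h|h|h|h|h|h
          · exact absurd h.symm kk3
          · exact absurd h kk1
          · exact finish x1 x3 hm1.1 hm1.2.1 hm1.2.2 hm3.1 hm3.2.1 hm3.2.2 h13 h
          · exact absurd h kk2
          · exact finish x2 x3 hm2.1 hm2.2.1 hm2.2.2 hm3.1 hm3.2.1 hm3.2.2 h23 h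
          · exact finish x1 x2 hm1.1 hm1.2.1 hm1.2.2 hm2.1 hm2.2.1 hm2.2.2 h12 h
        obtain ⟨t, ht, htr0, htr', hteq⟩ := hcherry
        exact cherry t r' r0 (hreps_ne t ht r' hr' htr') (hreps_ne t ht r0 hr0 htr0)
          (hreps_ne r' hr' r0 hr0 hne) hteq
      have h5q : N ≤ 5 * q r0 := by
        have htot := Finset.sum_le_card_nsmul reps q (q r0) (fun r hr => hmax r hr)
        rw [hp] at htot
        simp only [smul_eq_mul] at htot
        have hps' : reps.sum q = N := hps
        omega
      have hq0 : s + 1 ≤ q r0 := by omega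
      have hsplit : ∑ r ∈ reps.erase r0, q r + q r0 = N := by
        rw [Finset.sum_erase_add reps q hr0, hps]
      have hEcard4 : (reps.erase r0).card = 4 := by
        rw [Finset.card_erase_of_mem hr0, hp]
      have hEb : (∑ r ∈ reps.erase r0, q r) + 4 * q r0 ≤ 4 * n := by
        have hbd : ∀ r' ∈ reps.erase r0, q r' + q r0 ≤ n := fun r' hr' =>
          pairbound r' (Finset.mem_of_mem_erase hr') (Finset.ne_of_mem_erase hr')
        have htot := Finset.sum_le_card_nsmul (reps.erase r0) (fun r' => q r' + q r0) n hbd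
        rw [Finset.sum_add_distrib, Finset.sum_const, hEcard4] at htot
        simp only [smul_eq_mul] at htot
        omega
      omega
  · -- p ≥ 6
    obtain ⟨r, hr⟩ := Finset.card_pos.mp (by omega : 0 < reps.card)
    set E := reps.erase r with hEdef
    have hEcard : 5 ≤ E.card := by
      rw [hEdef, Finset.card_erase_of_mem hr]; omega
    have hEsplit : E = E.filter (fun r' => c r r' = α) ∪ E.filter (fun r' => c r r' = β) := by
      apply Finset.Subset.antisymm
      · intro r' hr'
        have hne := Finset.ne_of_mem_erase hr'
        have hr'reps := Finset.mem_of_mem_erase hr'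
        have hcne : c r r' ≠ κ := hcol_ne r hr r' hr'reps (Ne.symm hne)
        rcases fin3_resolve (c r r') α κ β (Ne.symm hκα) hαβ hκβ hcne with h | h
        · exact Finset.mem_union_left _ (Finset.mem_filter.mpr ⟨hr', h⟩)
        · exact Finset.mem_union_right _ (Finset.mem_filter.mpr ⟨hr', h⟩)
      · intro r' hr'
        rcases Finset.mem_union.mp hr' with h | h <;> exact (Finset.mem_filter.mp h).1
    have hbig : 3 ≤ (E.filter (fun r' => c r r' = α)).card ∨
        3 ≤ (E.filter (fun r' => c r r' = β)).card := by
      have := Finset.card_union_le (E.filter (fun r' => c r r' = α)) (E.filter (fun r' => c r r' = β))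
      rw [← hEsplit] at this
      omega
    have hfin : ∀ μ : Fin 3, 3 ≤ (E.filter (fun r' => c r r' = μ)).card → False := by
      intro μ hμ
      obtain ⟨T, hT, hTcard⟩ := Finset.exists_subset_card_eq hμ
      obtain ⟨r1, r2, r3, h12, h13, h23, hTeq⟩ := Finset.card_eq_three.mp hTcard
      have hmem : ∀ x ∈ T, x ∈ reps ∧ x ≠ r ∧ c r x = μ := by
        intro x hx
        have := hT hx
        have h1 := Finset.mem_filter.mp this
        exact ⟨Finset.mem_of_mem_erase h1.1, Finset.ne_of_mem_erase h1.1, h1.2⟩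
      have hm1 := hmem r1 (by rw [hTeq]; simp)
      have hm2 := hmem r2 (by rw [hTeq]; simp)
      have hm3 := hmem r3 (by rw [hTeq]; simp)
      exact no_three r r1 r2 r3
        (hreps_ne r hr r1 hm1.1 (Ne.symm hm1.2.1))
        (hreps_ne r hr r2 hm2.1 (Ne.symm hm2.2.1))
        (hreps_ne r hr r3 hm3.1 (Ne.symm hm3.2.1))
        (hreps_ne r1 hm1.1 r2 hm2.1 h12)
        (hreps_ne r1 hm1.1 r3 hm3.1 h13)
        (hreps_ne r2 hm2.1 r3 hm3.1 h23)
        (by rw [hm1.2.2, hm2.2.2]) (by rw [hm1.2.2, hm3.2.2])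
    rcases hbig with h | h
    · exact hfin α h
    · exact hfin β h

end Part2

section UpperMain
variable {N : ℕ} {c : Fin N → Fin N → Fin 3} {n m s e : ℕ}

lemma noHuge (hsym : IsSymmColoring c) (hDS : ¬ HasMonoDoubleStar c n m)
    (hn : n = 2*s + e) (he : e ≤ 1) (hm : 1 ≤ m) (hnm : 6*m + 7 ≤ n)
    (hN : 5*s + e + 1 ≤ N) :
    ∀ (u : Fin N) (μ : Fin 3), (NB c μ u).card ≤ n + m := by
  by_contra hbig
  push_neg at hbig
  obtain ⟨u, i, hu⟩ := hbig
  have hse : 3*m + 4 ≤ s + e := by omega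
  obtain ⟨j, k, hij, hik, hjk⟩ := fin3_exists_other i
  set W := NB c i u with hWdef
  have htiny : ∀ w ∈ W, (NB c i w).card ≤ m := by
    intro w hw
    have h := mem_NB.mp hw
    exact factH hsym hDS (Ne.symm h.1) h.2 (show n+m+1 ≤ (NB c i u).card by rw [← hWdef]; omega)
  set Aj := W.filter (fun w => n+m+1 ≤ (NB c j w).card) with hAjdef
  set Ak := W.filter (fun w => n+m+1 ≤ (NB c k w).card) with hAkdef
  have hcover : W ⊆ Aj ∪ Ak := by
    intro w hw
    have hd := degsum (c := c) i j k hij hik hjk w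
    have h1 := htiny w hw
    by_cases hj : n+m+1 ≤ (NB c j w).card
    · exact Finset.mem_union_left _ (Finset.mem_filter.mpr ⟨hw, hj⟩)
    · refine Finset.mem_union_right _ (Finset.mem_filter.mpr ⟨hw, ?_⟩)
      omega
  have hcards : n + m + 1 ≤ 2 * Aj.card ∨ n + m + 1 ≤ 2 * Ak.card := by
    have h1 := Finset.card_le_card hcover
    have h2 := Finset.card_union_le Aj Ak
    omega
  rcases hcards with h | h
  · refine subPart1 hsym hDS s e hn he hm hnm hN hij hik hjk Aj ?_ ?_ h
    · intro a ha; exact (Finset.mem_filter.mp ha).2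
    · intro a ha; exact htiny a (Finset.mem_filter.mp ha).1
  · refine subPart1 hsym hDS s e hn he hm hnm hN hik hij (Ne.symm hjk) Ak ?_ ?_ h
    · intro a ha; exact (Finset.mem_filter.mp ha).2
    · intro a ha; exact htiny a (Finset.mem_filter.mp ha).1

lemma upperMain (n m s e N : ℕ)
    (hn : n = 2*s + e) (he : e ≤ 1) (hm : 1 ≤ m) (hnm : 6*m + 7 ≤ n)
    (hN : 5*s + e + 1 ≤ N) : grHolds 3 n m N := by
  intro c hsym
  by_cases hGal : HasRainbowTriangle c
  · exact Or.inl hGal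
  by_cases hDS : HasMonoDoubleStar c n m
  · exact Or.inr hDS
  exact absurd (part2 hsym hGal hDS hn he hm hnm hN
    (noHuge hsym hDS hn he hm hnm hN)) (fun h => h)

end UpperMain

section Lower

def partIdx (s : ℕ) (x : ℕ) : ℕ := min (x / s) 4

def pent (a b : ℕ) : Fin 3 := if (a + 5 - b) % 5 = 1 ∨ (a + 5 - b) % 5 = 4 then 0 else 1

def lowCol (s : ℕ) {M : ℕ} (x y : Fin M) : Fin 3 :=
  if partIdx s x.val = partIdx s y.val then 2 else pent (partIdx s x.val) (partIdx s y.val)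

lemma partIdx_le (s x : ℕ) : partIdx s x ≤ 4 := min_le_right _ _

lemma pent_symm {a b : ℕ} (ha : a ≤ 4) (hb : b ≤ 4) : pent a b = pent b a := by
  unfold pent
  have h : ((a + 5 - b) % 5 = 1 ∨ (a + 5 - b) % 5 = 4) ↔
      ((b + 5 - a) % 5 = 1 ∨ (b + 5 - a) % 5 = 4) := by omega
  rw [if_congr h rfl rfl]

lemma pent_cases (a b : ℕ) : pent a b = 0 ∨ pent a b = 1 := by
  unfold pent; split
  · exact Or.inl rfl
  · exact Or.inr rfl

lemma lowCol_symm (s M : ℕ) : IsSymmColoring (lowCol s (M := M)) := by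
  intro u v
  unfold lowCol
  by_cases h : partIdx s u.val = partIdx s v.val
  · rw [if_pos h, if_pos h.symm]
  · rw [if_neg h, if_neg (fun h' => h h'.symm),
      pent_symm (partIdx_le s u.val) (partIdx_le s v.val)]

lemma fin3_two_of_pent : ∀ a b c' : Fin 3, (a = 0 ∨ a = 1) → (b = 0 ∨ b = 1) →
    (c' = 0 ∨ c' = 1) → (a = b ∨ a = c' ∨ b = c') := by decide

lemma lowCol_noRainbow (s M : ℕ) : ¬ HasRainbowTriangle (lowCol s (M := M)) := by
  rintro ⟨u, v, w, huv, huw, hvw, h1, h2, h3⟩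
  by_cases puv : partIdx s u.val = partIdx s v.val
  · by_cases puw : partIdx s u.val = partIdx s w.val
    · have pvw : partIdx s v.val = partIdx s w.val := (puv.symm).trans puw
      exact h1 (by simp [lowCol, puv, puw, pvw])
    · apply h3
      have hvw' : ¬ partIdx s v.val = partIdx s w.val := by rw [← puv]; exact puw
      have e1 : lowCol s u w = pent (partIdx s u.val) (partIdx s w.val) := by
        simp [lowCol, puw]
      have e2 : lowCol s v w = pent (partIdx s v.val) (partIdx s w.val) := by
        simp [lowCol, hvw']
      rw [e1, e2, ← puv]
  · by_cases puw : partIdx s u.val = partIdx s w.val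
    · apply h2
      have hvw' : ¬ partIdx s v.val = partIdx s w.val := by
        intro h; exact puv (by rw [h, ← puw])
      have e1 : lowCol s u v = pent (partIdx s u.val) (partIdx s v.val) := by
        simp [lowCol, puv]
      have e2 : lowCol s v w = pent (partIdx s v.val) (partIdx s w.val) := by
        simp [lowCol, hvw']
      rw [e1, e2, ← puw, pent_symm (partIdx_le s u.val) (partIdx_le s v.val)]
    · by_cases pvw : partIdx s v.val = partIdx s w.val
      · apply h1
        have e1 : lowCol s u v = pent (partIdx s u.val) (partIdx s v.val) := by
          simp [lowCol, puv]
        have e2 : lowCol s u w = pent (partIdx s u.val) (partIdx s w.val) := by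
          simp [lowCol, puw]
        rw [e1, e2, pvw]
      · have e1 : lowCol s u v = pent (partIdx s u.val) (partIdx s v.val) := by
          simp [lowCol, puv]
        have e2 : lowCol s u w = pent (partIdx s u.val) (partIdx s w.val) := by
          simp [lowCol, puw]
        have e3 : lowCol s v w = pent (partIdx s v.val) (partIdx s w.val) := by
          simp [lowCol, pvw]
        rcases fin3_two_of_pent (lowCol s u v) (lowCol s u w) (lowCol s v w)
          (by rw [e1]; exact pent_cases _ _) (by rw [e2]; exact pent_cases _ _)
          (by rw [e3]; exact pent_cases _ _) with h | h | h
        · exact h1 h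
        · exact h2 h
        · exact h3 h

lemma size_bound (s e : ℕ) (hs : 1 ≤ s) (i : ℕ) :
    ((univ : Finset (Fin (5*s+e))).filter (fun x => partIdx s x.val = i)).card ≤
      s + (if i = 4 then e else 0) := by
  classical
  have hmaps : ∀ x ∈ (univ : Finset (Fin (5*s+e))).filter (fun x => partIdx s x.val = i),
      x.val ∈ Finset.Ico (s*i) (s*i + (s + if i = 4 then e else 0)) := by
    intro x hx
    have hpi : partIdx s x.val = i := (Finset.mem_filter.mp hx).2
    have hd := Nat.div_add_mod x.val s
    have hr : x.val % s < s := Nat.mod_lt _ (by omega)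
    have hlt : x.val < 5*s+e := x.isLt
    have hi4 : i ≤ 4 := by rw [← hpi]; exact partIdx_le s x.val
    unfold partIdx at hpi
    rcases Nat.lt_or_ge i 4 with h4 | h4
    · have hdiv : x.val / s = i := by omega
      rw [Finset.mem_Ico]
      rw [if_neg (by omega)]
      rw [← hdiv]
      omega
    · have hieq : i = 4 := by omega
      subst hieq
      have hdiv : 4 ≤ x.val / s := by omega
      have hmul : s * 4 ≤ s * (x.val / s) := Nat.mul_le_mul_left s hdiv
      rw [Finset.mem_Ico, if_pos rfl]
      omega
  have hinj : Set.InjOn (fun x : Fin (5*s+e) => x.val)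
      ((univ : Finset (Fin (5*s+e))).filter (fun x => partIdx s x.val = i)) := by
    intro a _ b _ hab
    exact Fin.val_injective hab
  have := Finset.card_le_card_of_injOn _ hmaps hinj
  rw [Nat.card_Ico] at this
  omega

/-- degree bound for the construction -/
lemma lowCol_deg (n m s e : ℕ) (hn : n = 2*s+e) (he : e ≤ 1) (hs : 1 ≤ s)
    (u : Fin (5*s+e)) (col : Fin 3) :
    ((univ : Finset (Fin (5*s+e))).filter
      (fun x => x ≠ u ∧ lowCol s u x = col)).card ≤ n := by
  classical
  have hpu4 : partIdx s u.val ≤ 4 := partIdx_le s u.val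
  by_cases hcol : col = 2
  · subst hcol
    have hsub : (univ : Finset (Fin (5*s+e))).filter (fun x => x ≠ u ∧ lowCol s u x = 2) ⊆
        (univ : Finset (Fin (5*s+e))).filter (fun x => partIdx s x.val = partIdx s u.val) := by
      intro x hx
      have hc : lowCol s u x = 2 := (Finset.mem_filter.mp hx).2.2
      refine Finset.mem_filter.mpr ⟨Finset.mem_univ x, ?_⟩
      by_contra hne
      have hcx : lowCol s u x = pent (partIdx s u.val) (partIdx s x.val) := by
        unfold lowCol
        rw [if_neg (fun h => hne h.symm)]
      rw [hcx] at hc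
      rcases pent_cases (partIdx s u.val) (partIdx s x.val) with h | h <;>
        rw [h] at hc <;> exact absurd hc (by decide)
    have h1 := Finset.card_le_card hsub
    have h2 := size_bound s e hs (partIdx s u.val)
    have h3 : (if partIdx s u.val = 4 then e else 0) ≤ e := by split <;> omega
    omega
  · have hcol01 : col = 0 ∨ col = 1 := by
      have hh : ∀ c' : Fin 3, c' ≠ 2 → c' = 0 ∨ c' = 1 := by decide
      exact hh col hcol
    have hpick : ∃ a b : ℕ, a ≠ b ∧ (∀ px, px ≤ 4 → px ≠ partIdx s u.val →
        pent (partIdx s u.val) px = col → (px = a ∨ px = b)) := by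
      rcases hcol01 with h | h
      · subst h
        refine ⟨(partIdx s u.val + 1) % 5, (partIdx s u.val + 4) % 5, by omega, ?_⟩
        intro px hpx4 hne hpent
        have hcond : (partIdx s u.val + 5 - px) % 5 = 1 ∨ (partIdx s u.val + 5 - px) % 5 = 4 := by
          by_contra hcond
          unfold pent at hpent
          rw [if_neg hcond] at hpent
          exact absurd hpent (by decide)
        omega
      · subst h
        refine ⟨(partIdx s u.val + 2) % 5, (partIdx s u.val + 3) % 5, by omega, ?_⟩
        intro px hpx4 hne hpent
        have hcond : ¬ ((partIdx s u.val + 5 - px) % 5 = 1 ∨ (partIdx s u.val + 5 - px) % 5 = 4) := by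
          intro hcond
          unfold pent at hpent
          rw [if_pos hcond] at hpent
          exact absurd hpent (by decide)
        omega
    obtain ⟨a, b, hab, hclass⟩ := hpick
    have hsub : (univ : Finset (Fin (5*s+e))).filter (fun x => x ≠ u ∧ lowCol s u x = col) ⊆
        ((univ : Finset (Fin (5*s+e))).filter (fun x => partIdx s x.val = a)) ∪
        ((univ : Finset (Fin (5*s+e))).filter (fun x => partIdx s x.val = b)) := by
      intro x hx
      obtain ⟨hxu, hc⟩ := (Finset.mem_filter.mp hx).2
      have hne : partIdx s x.val ≠ partIdx s u.val := by
        intro h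
        rw [show lowCol s u x = 2 by unfold lowCol; rw [if_pos h.symm]] at hc
        exact hcol hc.symm
      have hcx : lowCol s u x = pent (partIdx s u.val) (partIdx s x.val) := by
        unfold lowCol
        rw [if_neg (fun h => hne h.symm)]
      rw [hcx] at hc
      rcases hclass (partIdx s x.val) (partIdx_le s x.val) hne hc with h | h
      · exact Finset.mem_union_left _ (Finset.mem_filter.mpr ⟨Finset.mem_univ x, h⟩)
      · exact Finset.mem_union_right _ (Finset.mem_filter.mpr ⟨Finset.mem_univ x, h⟩)
    have h1 := Finset.card_le_card hsub
    have h2 := Finset.card_union_le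
      ((univ : Finset (Fin (5*s+e))).filter (fun x => partIdx s x.val = a))
      ((univ : Finset (Fin (5*s+e))).filter (fun x => partIdx s x.val = b))
    have h3 := size_bound s e hs a
    have h4 := size_bound s e hs b
    have h5 : (if a = 4 then e else 0) + (if b = 4 then e else 0) ≤ e := by
      by_cases ha : a = 4
      · rw [if_pos ha, if_neg (by rw [← ha]; exact fun h => hab h.symm)]; omega
      · rw [if_neg ha]; split <;> omega
    omega

lemma lowerMain (n m s e : ℕ) (hn : n = 2*s+e) (he : e ≤ 1) (hs : 1 ≤ s) :
    grAvoid 3 n m (5*s+e) := by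
  classical
  refine ⟨lowCol s, lowCol_symm s _, lowCol_noRainbow s _, ?_⟩
  rintro ⟨u, v, A, B, col, huv, hA, hB, hdisj, huA, huB, hvA, hvB, hcuv, hcA, hcB⟩
  have hsub : insert v A ⊆ (univ : Finset (Fin (5*s+e))).filter
      (fun x => x ≠ u ∧ lowCol s u x = col) := by
    intro x hx
    rcases Finset.mem_insert.mp hx with rfl | hx
    · exact Finset.mem_filter.mpr ⟨Finset.mem_univ x, Ne.symm huv, hcuv⟩
    · refine Finset.mem_filter.mpr ⟨Finset.mem_univ x, ?_, hcA x hx⟩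
      rintro rfl; exact huA hx
  have hc1 := Finset.card_le_card hsub
  rw [Finset.card_insert_of_notMem hvA, hA] at hc1
  have := lowCol_deg n m s e hn he hs u col
  omega

end Lower

/-- For n ≥ 6m+7 and m ≥ 1, `gr_3(K_3 : S(n,m))` equals `5(n/2)+1` for even `n`
and `5((n-1)/2)+2` for odd `n`. -/
theorem stmt_10 (n m : ℕ) (hm : 1 ≤ m) (hn : 6 * m + 7 ≤ n) :
    (∀ N, (if Even n then 5 * (n / 2) + 1 else 5 * ((n - 1) / 2) + 2) ≤ N →
      grHolds 3 n m N) ∧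
    grAvoid 3 n m ((if Even n then 5 * (n / 2) + 1 else 5 * ((n - 1) / 2) + 2) - 1) := by
  have hs : n = 2*(n/2) + n%2 := by omega
  have he : n%2 ≤ 1 := by omega
  constructor
  · intro N hN
    apply upperMain n m (n/2) (n%2) N hs he hm hn
    by_cases hev : Even n
    · rw [if_pos hev] at hN
      have h0 : n % 2 = 0 := Nat.even_iff.mp hev
      omega
    · rw [if_neg hev] at hN
      have h0 : n % 2 = 1 := Nat.odd_iff.mp (Nat.not_even_iff_odd.mp hev)
      omega
  · have heq : (if Even n then 5 * (n / 2) + 1 else 5 * ((n - 1) / 2) + 2) - 1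
        = 5*(n/2) + n%2 := by
      by_cases hev : Even n
      · rw [if_pos hev]
        have h0 : n % 2 = 0 := Nat.even_iff.mp hev
        omega
      · rw [if_neg hev]
        have h0 : n % 2 = 1 := Nat.odd_iff.mp (Nat.not_even_iff_odd.mp hev)
        omega
    rw [heq]
    exact lowerMain n m (n/2) (n%2) hs he (by omega)
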